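/- Fix a finite multiset of pairs (x_t, y_t) with y_t ∈ {0,1}, a level p ∈ [0,1], a bound B ≥ 1, and a function f with f(x_t)² ≤ B for all t. Suppose the average calibration error (1/n) Σ_t f(x_t)(y_t - p) is at least α for some α ∈ [0,1]. Then, setting η = min(1, α / ((1/n) Σ_t f(x_t)²)) and f'(x) = p + η f(x), one has (1/n) Σ_t [(p - y_t)² - (f'(x_t) - y_t)²] ≥ α²/B. Moreover f'(x_t)² ≤ (1+√B)² for all t. -/

import Mathlib

/-- If the average calibration error of forecast `p` against `f` is at least `α`, then the
affine shift `f'(x) = p + η f(x)` witnesses contextual swap regret at least `α²/B`,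
and `f'` is bounded by `(1+√B)²`. -/
theorem calibration_error_implies_swap_regret {ι X : Type*} (S : Finset ι) (hS : S.Nonempty)
    (x : ι → X) (y : ι → ℝ) (hy : ∀ t ∈ S, y t = 0 ∨ y t = 1)
    (p : ℝ) (hp : p ∈ Set.Icc (0:ℝ) 1) (B : ℝ) (hB : 1 ≤ B)
    (f : X → ℝ) (hf : ∀ t ∈ S, (f (x t)) ^ 2 ≤ B)
    (α : ℝ) (hα : α ∈ Set.Icc (0:ℝ) 1)
    (hcal : α ≤ (1 / (S.card : ℝ)) * ∑ t ∈ S, f (x t) * (y t - p))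
    (η : ℝ) (hη : η = min 1 (α / ((1 / (S.card : ℝ)) * ∑ t ∈ S, (f (x t)) ^ 2)))
    (f' : X → ℝ) (hf' : ∀ z, f' z = p + η * f z) :
    α ^ 2 / B ≤ (1 / (S.card : ℝ)) * ∑ t ∈ S, ((p - y t) ^ 2 - (f' (x t) - y t) ^ 2) ∧
      ∀ t ∈ S, (f' (x t)) ^ 2 ≤ (1 + Real.sqrt B) ^ 2 := by
  obtain ⟨hp0, hp1⟩ := hp
  obtain ⟨hα0, hα1⟩ := hα
  have hBpos : (0:ℝ) < B := by linarith
  have hn : (0:ℝ) < (S.card : ℝ) := by exact_mod_cast Finset.card_pos.mpr hS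
  set n : ℝ := (S.card : ℝ) with hn_def
  set Q : ℝ := (1/n) * ∑ t ∈ S, (f (x t))^2 with hQdef
  set C : ℝ := (1/n) * ∑ t ∈ S, f (x t) * (y t - p) with hCdef
  have hsumQ0 : (0:ℝ) ≤ ∑ t ∈ S, (f (x t))^2 :=
    Finset.sum_nonneg fun t _ => sq_nonneg _
  have hQ0 : 0 ≤ Q := mul_nonneg (by positivity) hsumQ0
  have hQB : Q ≤ B := by
    have h := Finset.sum_le_card_nsmul S (fun t => (f (x t))^2) B (fun t ht => hf t ht)
    rw [nsmul_eq_mul] at h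
    calc Q ≤ (1/n) * (n * B) := by
          exact mul_le_mul_of_nonneg_left h (by positivity)
      _ = B := by field_simp
  have hη0 : 0 ≤ η := by
    rw [hη]; exact le_min zero_le_one (div_nonneg hα0 hQ0)
  have hη1 : η ≤ 1 := by rw [hη]; exact min_le_left _ _
  have key : (1/n) * ∑ t ∈ S, ((p - y t)^2 - (f' (x t) - y t)^2)
      = 2*η*C - η^2*Q := by
    have hpt : ∀ t ∈ S, (p - y t)^2 - (f' (x t) - y t)^2
        = 2*η*(f (x t)*(y t - p)) - η^2*(f (x t))^2 := by
      intro t _; rw [hf']; ring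
    rw [Finset.sum_congr rfl hpt, Finset.sum_sub_distrib, ← Finset.mul_sum, ← Finset.mul_sum,
      hCdef, hQdef]
    ring
  constructor
  · rw [key]
    rcases hα0.lt_or_eq with hαpos | hα0'
    · have hQpos : 0 < Q := by
        rcases hQ0.lt_or_eq with h | h
        · exact h
        · exfalso
          have hsum0 : ∑ t ∈ S, (f (x t))^2 = 0 := by
            have h' : (1/n) * ∑ t ∈ S, (f (x t))^2 = 0 := h.symm
            rcases mul_eq_zero.mp h' with h'' | h''
            · exact absurd h'' (one_div_ne_zero hn.ne')
            · exact h''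
          have hzero : ∀ t ∈ S, f (x t) = 0 := by
            intro t ht
            have := (Finset.sum_eq_zero_iff_of_nonneg (fun t _ => sq_nonneg (f (x t)))).mp
              hsum0 t ht
            exact pow_eq_zero_iff (by norm_num) |>.mp this
          have hC0 : C = 0 := by
            rw [hCdef, Finset.sum_eq_zero (fun t ht => by rw [hzero t ht]; ring), mul_zero]
          rw [hC0] at hcal
          linarith
      rcases le_total 1 (α/Q) with hge | hle
      · -- η = 1, Q ≤ α
        have hQle : Q ≤ α := by
          have := (le_div_iff₀ hQpos).mp hge
          linarith
        rw [hη, min_eq_left hge]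
        have h1 : α^2/B ≤ α := by
          rw [div_le_iff₀ hBpos]; nlinarith
        have hC : α ≤ C := hcal
        nlinarith
      · rw [hη, min_eq_right hle]
        have hC : α ≤ C := hcal
        have hrhs : 2*(α/Q)*C - (α/Q)^2*Q = (2*C - α) * α / Q := by
          field_simp
        rw [hrhs, div_le_div_iff₀ hBpos hQpos]
        have hint1 : 0 ≤ (C - α)*α*B :=
          mul_nonneg (mul_nonneg (sub_nonneg.mpr hC) hα0) hBpos.le
        have hint2 : 0 ≤ α^2*(B - Q) := mul_nonneg (sq_nonneg α) (sub_nonneg.mpr hQB)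
        nlinarith
    · -- α = 0
      have hηval : η = 0 := by rw [hη, ← hα0']; simp
      rw [← hα0', hηval]
      simp
  · intro t ht
    rw [hf']
    have hfb : |f (x t)| ≤ Real.sqrt B := by
      rw [← Real.sqrt_sq_eq_abs]; exact Real.sqrt_le_sqrt (hf t ht)
    have hηabs : |η| ≤ 1 := abs_le.mpr ⟨by linarith, hη1⟩
    have h2 : |η| * |f (x t)| ≤ 1 * Real.sqrt B :=
      mul_le_mul hηabs hfb (abs_nonneg _) zero_le_one
    have hpabs : |p| ≤ 1 := abs_le.mpr ⟨by linarith, hp1⟩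
    have habs : |p + η * f (x t)| ≤ 1 + Real.sqrt B := by
      calc |p + η * f (x t)| ≤ |p| + |η * f (x t)| := abs_add_le _ _
        _ ≤ 1 + Real.sqrt B := by rw [abs_mul]; linarith
    calc (p + η * f (x t))^2 = |p + η * f (x t)|^2 := (sq_abs _).symm
      _ ≤ (1 + Real.sqrt B)^2 := pow_le_pow_left₀ (abs_nonneg _) habs 2
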